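/- The function α ↦ 4^α B(1+α, 1+α) is strictly increasing on [0, ∞) and tends to +∞ as α → ∞. -/

import Mathlib

open Filter

/-- Euler Beta function in terms of the Gamma function. -/
noncomputable def Beta (a b : ℝ) : ℝ := Real.Gamma a * Real.Gamma b / Real.Gamma (a + b)

lemma beta_int (α : ℝ) (hα : 0 ≤ α) :
    Beta (1+α) (1+α) = ∫ t in (0:ℝ)..1, (t*(1-t))^α := by
  have hre : 0 < Complex.re (1+α : ℂ) := by simp; linarith
  have h := Complex.Gamma_mul_Gamma_eq_betaIntegral (s := (1+α:ℂ)) (t := (1+α:ℂ)) hre hre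
  have hint : Complex.betaIntegral (1+α) (1+α)
      = ((∫ t in (0:ℝ)..1, (t*(1-t))^α : ℝ) : ℂ) := by
    rw [Complex.betaIntegral, ← intervalIntegral.integral_ofReal]
    apply intervalIntegral.integral_congr
    intro x hx
    rw [Set.uIcc_of_le (by norm_num : (0:ℝ) ≤ 1)] at hx
    have hx0 : (0:ℝ) ≤ x := hx.1
    have hx1 : (0:ℝ) ≤ 1 - x := by linarith [hx.2]
    simp only [add_sub_cancel_left]
    rw [Real.mul_rpow hx0 hx1, Complex.ofReal_mul,
      Complex.ofReal_cpow hx0, Complex.ofReal_cpow hx1]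
    push_cast
    ring
  rw [hint] at h
  have hG : ((1:ℂ)+α) + (1+α) = ((2+2*α : ℝ):ℂ) := by push_cast; ring
  rw [hG, Complex.Gamma_ofReal] at h
  have h1 : Complex.Gamma (1+α:ℂ) = ((Real.Gamma (1+α) : ℝ):ℂ) := by
    rw [← Complex.Gamma_ofReal]; push_cast; ring_nf
  rw [h1] at h
  have h2 : (Real.Gamma (1+α) * Real.Gamma (1+α) : ℝ)
      = Real.Gamma (2+2*α) * ∫ t in (0:ℝ)..1, (t*(1-t))^α := by
    exact_mod_cast h
  have hGpos : 0 < Real.Gamma (2+2*α) := Real.Gamma_pos_of_pos (by linarith)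
  rw [Beta]
  have : (1+α)+(1+α) = 2+2*α := by ring
  rw [this, h2, mul_div_assoc]
  field_simp

lemma J_eq (α : ℝ) (hα : 0 ≤ α) :
    (4:ℝ)^α * Beta (1+α) (1+α) = ∫ t in (0:ℝ)..1, (4*(t*(1-t)))^α := by
  rw [beta_int α hα, ← intervalIntegral.integral_const_mul]
  apply intervalIntegral.integral_congr
  intro x hx
  rw [Set.uIcc_of_le (by norm_num : (0:ℝ) ≤ 1)] at hx
  have hx1 : (0:ℝ) ≤ x*(1-x) := mul_nonneg hx.1 (by linarith [hx.2])
  exact (Real.mul_rpow (by norm_num) hx1).symm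

lemma cont_integrand (α : ℝ) (hα : 0 ≤ α) :
    Continuous fun t : ℝ => (4*(t*(1-t)))^α := by
  rw [continuous_iff_continuousAt]
  intro x
  exact (ContinuousAt.rpow_const (by fun_prop) (Or.inr hα))

lemma J_pos (α : ℝ) (hα : 0 ≤ α) :
    0 < ∫ t in (0:ℝ)..1, (4*(t*(1-t)))^α := by
  apply intervalIntegral.intervalIntegral_pos_of_pos_on
    ((cont_integrand α hα).intervalIntegrable _ _)
  · intro x hx
    exact Real.rpow_pos_of_pos (by nlinarith [hx.1, hx.2]) _
  · norm_num

lemma J_anti : StrictAntiOn (fun α : ℝ => ∫ t in (0:ℝ)..1, (4*(t*(1-t)))^α) (Set.Ici 0) := by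
  intro a ha b hb hab
  simp only
  apply intervalIntegral.integral_lt_integral_of_continuousOn_of_le_of_exists_lt
    (by norm_num) (cont_integrand b hb).continuousOn (cont_integrand a ha).continuousOn
  · intro x hx
    have h1 : 4*(x*(1-x)) ≤ 1 := by nlinarith [hx.1, hx.2, sq_nonneg (2*x-1)]
    rcases eq_or_lt_of_le (show (0:ℝ) ≤ 4*(x*(1-x)) by nlinarith [hx.1, hx.2]) with h0 | h0
    · rw [← h0]
      rcases eq_or_lt_of_le (Set.mem_Ici.mp ha) with rfl | ha'
      · rw [Real.zero_rpow hab.ne', Real.rpow_zero]; norm_num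
      · rw [Real.zero_rpow (by linarith), Real.zero_rpow (by positivity)]
    · exact Real.rpow_le_rpow_of_exponent_ge h0 h1 hab.le
  · refine ⟨1/4, by norm_num, ?_⟩
    have : (4:ℝ)*((1/4)*(1-1/4)) = 3/4 := by norm_num
    rw [this]
    exact Real.rpow_lt_rpow_of_exponent_gt (by norm_num) (by norm_num) hab

lemma dup_formula (α : ℝ) (hα : 0 ≤ α) :
    1 / ((4:ℝ)^α * Beta (1+α) (1+α))
      = 2 * Real.Gamma (α+3/2) / (Real.sqrt Real.pi * Real.Gamma (α+1)) := by
  have h := Real.Gamma_mul_Gamma_add_half (1+α)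
  have e1 : (1:ℝ)+α+1/2 = α+3/2 := by ring
  rw [e1, show (1:ℝ)+α = α+1 by ring] at h
  have hG1 : 0 < Real.Gamma (α+1) := Real.Gamma_pos_of_pos (by linarith)
  have hG3 : 0 < Real.Gamma (α+3/2) := Real.Gamma_pos_of_pos (by linarith)
  have hG2 : 0 < Real.Gamma (2*(α+1)) := Real.Gamma_pos_of_pos (by linarith)
  have hpi : 0 < Real.sqrt Real.pi := Real.sqrt_pos.mpr Real.pi_pos
  have h4 : (4:ℝ)^α = (2:ℝ)^(2*α) := by
    rw [show (4:ℝ) = (2:ℝ)^(2:ℝ) by norm_num [Real.rpow_natCast], ← Real.rpow_mul (by norm_num)]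
  have h2exp : (2:ℝ)^(1-2*(α+1)) = ((2:ℝ)^(2*α) * 2)⁻¹ := by
    rw [show (1:ℝ)-2*(α+1) = -(2*α+1) by ring, Real.rpow_neg (by norm_num),
      Real.rpow_add_one (by norm_num)]
  rw [h2exp] at h
  have hp2 : (0:ℝ) < (2:ℝ)^(2*α) := Real.rpow_pos_of_pos (by norm_num) _
  rw [Beta, show (1:ℝ)+α+(1+α) = 2*(α+1) by ring, show (1:ℝ)+α = α+1 by ring, h4]
  rw [div_eq_div_iff (by positivity) (by positivity)]
  have hG2' : Real.Gamma (2*(α+1))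
      = Real.Gamma (α+1) * Real.Gamma (α+3/2) * ((2:ℝ)^(2*α) * 2) / Real.sqrt Real.pi := by
    field_simp at h ⊢
    linarith [h]
  rw [hG2']
  have hpi2 : Real.sqrt Real.pi * Real.sqrt Real.pi = Real.pi := Real.mul_self_sqrt Real.pi_pos.le
  field_simp

lemma ratio_ge (α : ℝ) (hα : 0 ≤ α) :
    Real.sqrt (α+1/2) * Real.Gamma (α+1) ≤ Real.Gamma (α+3/2) := by
  have hh : (0:ℝ) < α+1/2 := by linarith
  have hGh : 0 < Real.Gamma (α+1/2) := Real.Gamma_pos_of_pos hh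
  have hG1 : 0 < Real.Gamma (α+1) := Real.Gamma_pos_of_pos (by linarith)
  have hG3 : 0 < Real.Gamma (α+3/2) := Real.Gamma_pos_of_pos (by linarith)
  have hc := Real.convexOn_log_Gamma.2 (Set.mem_Ioi.mpr hh)
    (Set.mem_Ioi.mpr (show (0:ℝ) < α+3/2 by linarith))
    (by norm_num : (0:ℝ) ≤ (1/2:ℝ)) (by norm_num : (0:ℝ) ≤ (1/2:ℝ)) (by norm_num)
  have hmid : (1/2:ℝ) • (α+1/2) + (1/2:ℝ) • (α+3/2) = α+1 := by
    simp [smul_eq_mul]; ring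
  rw [hmid] at hc
  simp only [Function.comp_apply, smul_eq_mul] at hc
  have hsq : Real.Gamma (α+1)^2 ≤ Real.Gamma (α+1/2) * Real.Gamma (α+3/2) := by
    have h2 : Real.log (Real.Gamma (α+1)^2)
        ≤ Real.log (Real.Gamma (α+1/2) * Real.Gamma (α+3/2)) := by
      rw [Real.log_pow, Real.log_mul hGh.ne' hG3.ne']
      push_cast; linarith
    exact (Real.log_le_log_iff (by positivity) (by positivity)).mp h2
  have hrec : Real.Gamma (α+3/2) = (α+1/2) * Real.Gamma (α+1/2) := by
    rw [show α+3/2 = (α+1/2)+1 by ring, Real.Gamma_add_one hh.ne']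
  have key : Real.Gamma (α+1)^2 * (α+1/2) ≤ Real.Gamma (α+3/2)^2 := by
    calc Real.Gamma (α+1)^2 * (α+1/2)
        ≤ Real.Gamma (α+1/2) * Real.Gamma (α+3/2) * (α+1/2) :=
          mul_le_mul_of_nonneg_right hsq hh.le
      _ = Real.Gamma (α+3/2)^2 := by rw [hrec]; ring
  have hs : Real.sqrt (α+1/2) * Real.Gamma (α+1)
      = Real.sqrt ((α+1/2) * Real.Gamma (α+1)^2) := by
    rw [Real.sqrt_mul hh.le, Real.sqrt_sq hG1.le]
  rw [hs]
  calc Real.sqrt ((α+1/2) * Real.Gamma (α+1)^2) ≤ Real.sqrt (Real.Gamma (α+3/2)^2) :=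
        Real.sqrt_le_sqrt (by linarith)
    _ = Real.Gamma (α+3/2) := Real.sqrt_sq hG3.le

theorem stmt15 :
    StrictMonoOn (fun α : ℝ => 1 / ((4:ℝ) ^ α * Beta (1 + α) (1 + α))) (Set.Ici 0) ∧
    Tendsto (fun α : ℝ => 1 / ((4:ℝ) ^ α * Beta (1 + α) (1 + α))) atTop atTop := by
  constructor
  · intro a ha b hb hab
    simp only
    rw [J_eq a ha, J_eq b hb]
    have h1 := J_anti ha hb hab
    have h2 := J_pos b hb
    exact one_div_lt_one_div_of_lt h2 h1
  · have hsqrt : Tendsto (fun x : ℝ => Real.sqrt (x + 1/2)) atTop atTop := by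
      have h := tendsto_rpow_atTop (y := (1/2:ℝ)) (by norm_num)
      refine (h.comp (tendsto_atTop_add_const_right atTop (1/2:ℝ) tendsto_id)).congr' ?_
      filter_upwards [eventually_ge_atTop (0:ℝ)] with x hx
      simp only [Function.comp]; rw [Real.sqrt_eq_rpow]; simp
    have hpi : 0 < 2 / Real.sqrt Real.pi := by
      positivity
    have hlow : Tendsto (fun α : ℝ => 2 / Real.sqrt Real.pi * Real.sqrt (α + 1/2))
        atTop atTop := hsqrt.const_mul_atTop hpi
    apply tendsto_atTop_mono' atTop ?_ hlow
    filter_upwards [eventually_ge_atTop (0:ℝ)] with α hα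
    rw [dup_formula α hα]
    have hG1 : 0 < Real.Gamma (α+1) := Real.Gamma_pos_of_pos (by linarith)
    have hpi' : 0 < Real.sqrt Real.pi := Real.sqrt_pos.mpr Real.pi_pos
    have heq : 2 / Real.sqrt Real.pi * Real.sqrt (α + 1/2)
        = 2 * (Real.sqrt (α+1/2) * Real.Gamma (α+1)) / (Real.sqrt Real.pi * Real.Gamma (α+1)) := by
      field_simp
    rw [heq]
    gcongr
    exact ratio_ge α hα
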